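/- arXiv:2307.14755 — 5 statements merged into one kernel-verified Lean document; each statement's English description precedes it below -/
import Mathlib

section
/- Assume the superquadratic parameter setting and set q := 2(k+α−1)/k and r := 2k'/k. Then 1 ≤ r < q < p and q/r < 2/r + 1 − 2/p. -/
/-- In the superquadratic setting, with `q := 2(k+α−1)/k` and `r := 2k'/k`, the
Gagliardo–Nirenberg admissibility conditions `1 ≤ r < q < p` and
`q/r < 2/r + 1 − 2/p` hold. -/
theorem stmt_5 (n : ℕ) (hn : 3 ≤ n) (α β k p k' q r : ℝ)
    (hβ : (n : ℝ) / 2 < β) (hα2 : 2 ≤ α) (hα : α < 1 + 2 * β / n)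
    (hk : max (β - α + 1) 1 < k)
    (hp : p = 2 * n / (n - 2))
    (hk' : k' = (k + α + β - 1) / 2)
    (hq : q = 2 * (k + α - 1) / k)
    (hr : r = 2 * k' / k) :
    1 ≤ r ∧ r < q ∧ q < p ∧ q / r < 2 / r + 1 - 2 / p := by
  have hN : (3:ℝ) ≤ n := by exact_mod_cast hn
  have hk1 : 1 < k := lt_of_le_of_lt (le_max_right _ _) hk
  have hkβ : β - α + 1 < k := lt_of_le_of_lt (le_max_left _ _) hk
  have hnpos : (0:ℝ) < n := by linarith
  have hn2 : (0:ℝ) < (n:ℝ) - 2 := by linarith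
  have hk0 : (0:ℝ) < k := by linarith
  have hαn : (α - 1) * n < 2 * β := by
    have h1 : α - 1 < 2 * β / n := by linarith
    exact (lt_div_iff₀ hnpos).mp h1
  have hβ0 : (0:ℝ) < β := by linarith
  subst hp hk' hq hr
  refine ⟨?_, ?_, ?_, ?_⟩
  · rw [le_div_iff₀ hk0]; linarith
  · rw [div_lt_div_iff₀ hk0 hk0]; nlinarith
  · rw [div_lt_div_iff₀ hk0 hn2]; nlinarith
  · have hs : (0:ℝ) < k + α + β - 1 := by linarith
    have hr' : 2 * ((k + α + β - 1) / 2) / k = (k + α + β - 1) / k := by ring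
    rw [hr']
    have h1 : k ≠ 0 := ne_of_gt hk0
    have h2 : k + α + β - 1 ≠ 0 := ne_of_gt hs
    have h3 : ((n:ℝ)) ≠ 0 := ne_of_gt hnpos
    have h4 : ((n:ℝ)) - 2 ≠ 0 := ne_of_gt hn2
    rw [div_div_div_cancel_right₀]
    rw [div_div_eq_mul_div, div_div_eq_mul_div]
    rw [div_lt_iff₀ hs]
    have key : (2 * k / (k + α + β - 1) + 1 - 2 * (↑n - 2) / (2 * ↑n)) * (k + α + β - 1)
        = 2 * k + (1 - ((n:ℝ) - 2) / n) * (k + α + β - 1) := by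
      field_simp
      ring
    rw [key]
    have h5 : (1 - ((n:ℝ) - 2) / n) = 2 / n := by field_simp; ring
    rw [h5, div_mul_eq_mul_div, ← sub_lt_iff_lt_add', lt_div_iff₀ hnpos]
    nlinarith
    exact h1
end

section
/- Assume the subquadratic parameter setting and set q := 2(k+1)/k, r := 2k'/k, λ := (1/r − 1/q)/(1/r − 1/p), γ := 2(1−λ)q/(2−λq), a₂ := β/(k+α+β−1) and b₂ := k'γ/r. Then a₂·b₂/β < 1 (equivalently, kγ < 4k'). -/
/-- In the subquadratic setting, the Young-inequality exponent condition
`a₂·b₂/β < 1` holds. -/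
theorem stmt_10 (n : ℕ) (hn : 3 ≤ n) (α β k p k' q r lam gam a₂ b₂ : ℝ)
    (hα1 : 1 ≤ α) (hα2 : α < 2) (hβ : (n + 4 : ℝ) / 2 - α < β)
    (hk : max 1 (1 - α + β) < k)
    (hp : p = 2 * n / (n - 2))
    (hk' : k' = (k + α + β - 1) / 2)
    (hq : q = 2 * (k + 1) / k)
    (hr : r = 2 * k' / k)
    (hlam : lam = (1 / r - 1 / q) / (1 / r - 1 / p))
    (hgam : gam = 2 * (1 - lam) * q / (2 - lam * q))
    (ha₂ : a₂ = β / (k + α + β - 1))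
    (hb₂ : b₂ = k' * gam / r) :
    a₂ * b₂ / β < 1 := by
  have hn3 : (3:ℝ) ≤ (n:ℝ) := by exact_mod_cast hn
  have hk1 : (1:ℝ) < k := lt_of_le_of_lt (le_max_left _ _) hk
  have hkβ : 1 - α + β < k := lt_of_le_of_lt (le_max_right _ _) hk
  have hβpos : 0 < β := by linarith
  have hk'pos : 0 < k' := by rw [hk']; linarith
  have h2k' : (n:ℝ) < 2 * k' := by rw [hk']; linarith
  have hE : 0 < k * n - k' * (n - 2) := by nlinarith [hk', hk1, hn3, hk'pos]
  have hk0 : k ≠ 0 := by positivity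
  have hk'0 : k' ≠ 0 := ne_of_gt hk'pos
  have hn0 : (n:ℝ) ≠ 0 := by positivity
  have hn2 : (n:ℝ) - 2 ≠ 0 := by intro h; linarith
  have hk1' : k + 1 ≠ 0 := by positivity
  have hE0 : k * n - k' * (n - 2) ≠ 0 := ne_of_gt hE
  have h2k'0 : 2 * k' - n ≠ 0 := by intro h; linarith
  have hrp : 1 / r - 1 / p = (k * n - k' * (n - 2)) / (2 * k' * n) := by
    rw [hr, hp]; field_simp
  have hlam' : lam = k * n * (k + 1 - k') / ((k + 1) * (k * n - k' * (n - 2))) := by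
    rw [hlam, hrp, hr, hq]
    rw [div_eq_div_iff (by positivity) (by positivity)]
    field_simp
  have h2lq : 2 - lam * q = 2 * (2 * k' - n) / (k * n - k' * (n - 2)) := by
    rw [hlam', hq]
    field_simp
    ring
  have h1l : 1 - lam = k' * (2 * k - n + 2) / ((k + 1) * (k * n - k' * (n - 2))) := by
    rw [hlam']
    field_simp
    ring
  have hgam' : gam = 2 * k' * (2 * k - n + 2) / (k * (2 * k' - n)) := by
    rw [hgam, h2lq, h1l, hq]
    field_simp
  have hkab : k + α + β - 1 ≠ 0 := by rw [hk'] at hk'0; intro h; apply hk'0; rw [h]; ring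
  have hkab2 : k + α + β - 1 = 2 * k' := by rw [hk']; ring
  have hfin : a₂ * b₂ / β = (2 * k - n + 2) / (2 * (2 * k' - n)) := by
    rw [ha₂, hb₂, hgam', hr, hkab2]
    field_simp
  rw [hfin, div_lt_one (by linarith)]
  rw [hk'] at h2k'
  linarith
end

section
/- Assume the superquadratic parameter setting, let Ω ⊆ ℝⁿ be a measurable set, and set q := 2(k+α−1)/k, r := 2k'/k, λ := (1/r − 1/q)/(1/r − 1/p) and γ := 2(1−λ)q/(2−λq). Then for all c, b > 0 there exists C > 0 such that for every measurable u : Ω → [0,∞) with u^β and u^{k+α−1} Lebesgue integrable on Ω, one has c·(∫_Ω u^{k'})^{γ/r} ≤ k·b·(∫_Ω u^{k+α−1})·(∫_Ω u^β) + C. -/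
open MeasureTheory Real Set

lemma young_aux' {Y θ : ℝ} (hY : 0 ≤ Y) (hθ0 : 0 ≤ θ) (hθ1 : θ ≤ 1) : Y ^ θ ≤ Y + 1 := by
  rcases le_total Y 1 with h | h
  · exact (Real.rpow_le_one hY h hθ0).trans (by linarith)
  · calc Y ^ θ ≤ Y ^ (1:ℝ) := Real.rpow_le_rpow_of_exponent_le h hθ1
      _ = Y := Real.rpow_one _
      _ ≤ Y + 1 := by linarith

lemma young_lemma' {θ c d : ℝ} (hθ0 : 0 ≤ θ) (hθ1 : θ < 1) (hc : 0 < c) (hd : 0 < d) :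
    ∃ C : ℝ, 0 < C ∧ ∀ X : ℝ, 0 ≤ X → c * X ^ θ ≤ d * X + C := by
  set s : ℝ := max 1 ((c / d) ^ (1 / (1 - θ))) with hs
  have hs1 : (1:ℝ) ≤ s := le_max_left _ _
  have hs0 : (0:ℝ) < s := lt_of_lt_of_le one_pos hs1
  refine ⟨c * s ^ θ, by positivity, fun X hX => ?_⟩
  have hXs : 0 ≤ X / s := div_nonneg hX hs0.le
  have h1 : X ^ θ ≤ s ^ θ * (X / s + 1) := by
    have h2 : (X / s) ^ θ ≤ X / s + 1 := young_aux' hXs hθ0 hθ1.le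
    calc X ^ θ = (s * (X / s)) ^ θ := by rw [mul_div_cancel₀ _ (ne_of_gt hs0)]
      _ = s ^ θ * (X / s) ^ θ := Real.mul_rpow hs0.le hXs
      _ ≤ s ^ θ * (X / s + 1) :=
        mul_le_mul_of_nonneg_left h2 (Real.rpow_nonneg hs0.le _)
  have key : c * s ^ (θ - 1) ≤ d := by
    have h3 : c / d ≤ s ^ (1 - θ) := by
      have h4 : (c / d) ^ (1 / (1 - θ)) ≤ s := le_max_right _ _
      have h5 : ((c / d) ^ (1 / (1 - θ))) ^ (1 - θ) = c / d := by
        rw [← Real.rpow_mul (by positivity), one_div,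
          inv_mul_cancel₀ (by linarith : (1:ℝ) - θ ≠ 0), Real.rpow_one]
      calc c / d = ((c / d) ^ (1 / (1 - θ))) ^ (1 - θ) := h5.symm
        _ ≤ s ^ (1 - θ) := Real.rpow_le_rpow (Real.rpow_nonneg (by positivity) _) h4 (by linarith)
    have h6 : s ^ (θ - 1) = (s ^ (1 - θ))⁻¹ := by
      rw [← Real.rpow_neg hs0.le]; ring_nf
    have h7 : 0 < s ^ (1 - θ) := Real.rpow_pos_of_pos hs0 _
    rw [h6]
    rw [div_le_iff₀ hd] at h3
    calc c * (s ^ (1 - θ))⁻¹ ≤ (s ^ (1 - θ) * d) * (s ^ (1 - θ))⁻¹ :=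
          mul_le_mul_of_nonneg_right h3 (by positivity)
      _ = d := by field_simp
  have hsplit : s ^ θ * (X / s) = s ^ (θ - 1) * X := by
    rw [Real.rpow_sub hs0, Real.rpow_one]; field_simp
  calc c * X ^ θ ≤ c * (s ^ θ * (X / s + 1)) :=
        mul_le_mul_of_nonneg_left h1 hc.le
    _ = (c * s ^ (θ - 1)) * X + c * s ^ θ := by rw [mul_add, hsplit]; ring
    _ ≤ d * X + c * s ^ θ := by
        have := mul_le_mul_of_nonneg_right key hX
        linarith

lemma exponent_bounds (ν α β k p k' q r lam gam : ℝ) (hν : 3 ≤ ν)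
    (hβ : ν / 2 < β) (hα2 : 2 ≤ α) (hα : α < 1 + 2 * β / ν)
    (hk1 : 1 < k) (hkβ : β - α + 1 < k)
    (hp : p = 2 * ν / (ν - 2))
    (hk' : k' = (k + α + β - 1) / 2)
    (hq : q = 2 * (k + α - 1) / k)
    (hr : r = 2 * k' / k)
    (hlam : lam = (1 / r - 1 / q) / (1 / r - 1 / p))
    (hgam : gam = 2 * (1 - lam) * q / (2 - lam * q)) :
    0 < gam / r ∧ gam / r < 2 := by
  have hν0 : (0:ℝ) < ν := by linarith
  have hν2 : (0:ℝ) < ν - 2 := by linarith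
  have hβ0 : (0:ℝ) < β := by linarith
  have hk0 : (0:ℝ) < k := by linarith
  have hm0 : (0:ℝ) < k + α - 1 := by linarith
  have hs0 : (0:ℝ) < k + α + β - 1 := by linarith
  have hnα : ν * (α - 1) < 2 * β := by
    have h := (lt_div_iff₀ hν0).mp (by linarith : α - 1 < 2 * β / ν)
    nlinarith
  have hE : (0:ℝ) < 2 * ν * k - (ν - 2) * (k + α + β - 1) := by
    nlinarith [mul_pos (by linarith : (0:ℝ) < ν + 2) (by linarith : (0:ℝ) < k - (β - α + 1))]
  have hD2 : (0:ℝ) < k + β - (ν - 1) * (α - 1) := by nlinarith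
  have hN : (0:ℝ) < 2 * k - (ν - 2) * (α - 1) := by nlinarith
  have h1 : 1 / r - 1 / q =
      k * ((k + α - 1) - β) / (2 * (k + α - 1) * (k + α + β - 1)) := by
    rw [hr, hq, hk']; field_simp; ring
  have h2 : 1 / r - 1 / p =
      (2 * ν * k - (ν - 2) * (k + α + β - 1)) / (2 * ν * (k + α + β - 1)) := by
    rw [hr, hp, hk']; field_simp
  have hlamv : lam = ν * k * ((k + α - 1) - β) /
      ((k + α - 1) * (2 * ν * k - (ν - 2) * (k + α + β - 1))) := by
    rw [hlam, h1, h2]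
    rw [div_div_div_eq]
    field_simp
  have h2q : 2 - lam * q = 4 * (k + β - (ν - 1) * (α - 1)) /
      (2 * ν * k - (ν - 2) * (k + α + β - 1)) := by
    rw [hlamv, hq]; field_simp; ring
  have hgr : gam / r = (2 * k - (ν - 2) * (α - 1)) / (k + β - (ν - 1) * (α - 1)) := by
    rw [hgam, h2q, hlamv, hq, hr, hk']
    field_simp
    ring
  rw [hgr]
  constructor
  · positivity
  · rw [div_lt_iff₀ hD2]; linarith

/-- Superquadratic interpolation/Young estimate: for all `c, b > 0` there is `C > 0` with
`c·(∫_Ω u^{k'})^{γ/r} ≤ k·b·(∫_Ω u^{k+α−1})·(∫_Ω u^β) + C`. -/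
theorem stmt_13 (n : ℕ) (hn : 3 ≤ n) (α β k p k' q r lam gam : ℝ)
    (hβ : (n : ℝ) / 2 < β) (hα2 : 2 ≤ α) (hα : α < 1 + 2 * β / n)
    (hk : max (β - α + 1) 1 < k)
    (hp : p = 2 * n / (n - 2))
    (hk' : k' = (k + α + β - 1) / 2)
    (hq : q = 2 * (k + α - 1) / k)
    (hr : r = 2 * k' / k)
    (hlam : lam = (1 / r - 1 / q) / (1 / r - 1 / p))
    (hgam : gam = 2 * (1 - lam) * q / (2 - lam * q))
    (Ω : Set (Fin n → ℝ)) (hΩ : MeasurableSet Ω) :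
    ∀ c b : ℝ, 0 < c → 0 < b → ∃ C : ℝ, 0 < C ∧
      ∀ u : (Fin n → ℝ) → ℝ, Measurable u → (∀ x ∈ Ω, 0 ≤ u x) →
        IntegrableOn (fun x => u x ^ β) Ω →
        IntegrableOn (fun x => u x ^ (k + α - 1)) Ω →
        c * (∫ x in Ω, u x ^ k') ^ (gam / r) ≤
          k * b * (∫ x in Ω, u x ^ (k + α - 1)) * (∫ x in Ω, u x ^ β) + C := by
  intro c b hc hb
  have hν : (3:ℝ) ≤ (n:ℝ) := by exact_mod_cast hn
  have hk1 : 1 < k := lt_of_le_of_lt (le_max_right _ _) hk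
  have hkβ : β - α + 1 < k := lt_of_le_of_lt (le_max_left _ _) hk
  have hβ0 : (0:ℝ) < β := by linarith
  have hm0 : (0:ℝ) < k + α - 1 := by linarith
  have hk'0 : (0:ℝ) < k' := by rw [hk']; linarith
  obtain ⟨hθ0, hθ2⟩ := exponent_bounds (n:ℝ) α β k p k' q r lam gam hν hβ hα2 hα
    hk1 hkβ hp hk' hq hr hlam hgam
  obtain ⟨C, hC, hY⟩ := young_lemma' (θ := gam / r / 2) (by linarith) (by linarith)
    hc (by positivity : (0:ℝ) < k * b)
  refine ⟨C, hC, fun u hu hu0 hIβ hIm => ?_⟩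
  set μ := volume.restrict Ω with hμ
  have hae : ∀ᵐ x ∂μ, x ∈ Ω := ae_restrict_mem hΩ
  have hu0' : ∀ᵐ x ∂μ, 0 ≤ u x := hae.mono fun x hx => hu0 x hx
  set f : (Fin n → ℝ) → ℝ := fun x => u x ^ (β / 2) with hf
  set g : (Fin n → ℝ) → ℝ := fun x => u x ^ ((k + α - 1) / 2) with hg
  have hfm : Measurable f := hu.pow measurable_const
  have hgm : Measurable g := hu.pow measurable_const
  have hf0 : 0 ≤ᵐ[μ] f := hu0'.mono fun x hx => Real.rpow_nonneg hx _
  have hg0 : 0 ≤ᵐ[μ] g := hu0'.mono fun x hx => Real.rpow_nonneg hx _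
  have hf2 : MemLp f (ENNReal.ofReal 2) μ := by
    rw [show ENNReal.ofReal 2 = 2 by norm_num]
    rw [memLp_two_iff_integrable_sq hfm.aestronglyMeasurable]
    refine (hIβ.congr ?_)
    filter_upwards [hu0'] with x hx
    rw [hf]
    simp only [sq]
    rw [← Real.rpow_add' hx (by positivity)]
    norm_num
  have hg2 : MemLp g (ENNReal.ofReal 2) μ := by
    rw [show ENNReal.ofReal 2 = 2 by norm_num]
    rw [memLp_two_iff_integrable_sq hgm.aestronglyMeasurable]
    refine (hIm.congr ?_)
    filter_upwards [hu0'] with x hx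
    rw [hg]
    simp only [sq]
    rw [← Real.rpow_add' hx (by linarith : (k + α - 1) / 2 + (k + α - 1) / 2 ≠ 0)]
    ring_nf
  have hconj : Real.HolderConjugate 2 2 := Real.HolderConjugate.two_two
  have hCS := integral_mul_le_Lp_mul_Lq_of_nonneg (μ := μ) hconj hf0 hg0 hf2 hg2
  have hfg : ∫ a, f a * g a ∂μ = ∫ x in Ω, u x ^ k' := by
    refine integral_congr_ae ?_
    filter_upwards [hu0'] with x hx
    rw [hf, hg]
    simp only
    rw [← Real.rpow_add' hx (by positivity : β / 2 + (k + α - 1) / 2 ≠ 0)]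
    rw [hk']; ring_nf
  have hfp : ∫ a, f a ^ (2:ℝ) ∂μ = ∫ x in Ω, u x ^ β := by
    refine integral_congr_ae ?_
    filter_upwards [hu0'] with x hx
    rw [hf]
    simp only
    rw [← Real.rpow_mul hx]
    norm_num
  have hgp : ∫ a, g a ^ (2:ℝ) ∂μ = ∫ x in Ω, u x ^ (k + α - 1) := by
    refine integral_congr_ae ?_
    filter_upwards [hu0'] with x hx
    rw [hg]
    simp only
    rw [← Real.rpow_mul hx]
    congr 1
    ring
  rw [hfg, hfp, hgp] at hCS
  have hIβ0 : 0 ≤ ∫ x in Ω, u x ^ β :=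
    setIntegral_nonneg hΩ fun x hx => Real.rpow_nonneg (hu0 x hx) _
  have hIm0 : 0 ≤ ∫ x in Ω, u x ^ (k + α - 1) :=
    setIntegral_nonneg hΩ fun x hx => Real.rpow_nonneg (hu0 x hx) _
  have hIk0 : 0 ≤ ∫ x in Ω, u x ^ k' :=
    setIntegral_nonneg hΩ fun x hx => Real.rpow_nonneg (hu0 x hx) _
  set X : ℝ := (∫ x in Ω, u x ^ β) * (∫ x in Ω, u x ^ (k + α - 1)) with hX
  have hX0 : 0 ≤ X := mul_nonneg hIβ0 hIm0
  have hCS2 : ∫ x in Ω, u x ^ k' ≤ X ^ (1/2 : ℝ) := by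
    rw [hX, Real.mul_rpow hIβ0 hIm0]
    exact hCS
  calc c * (∫ x in Ω, u x ^ k') ^ (gam / r)
      ≤ c * (X ^ (1/2:ℝ)) ^ (gam / r) :=
        mul_le_mul_of_nonneg_left
          (Real.rpow_le_rpow hIk0 hCS2 (by linarith)) hc.le
    _ = c * X ^ (gam / r / 2) := by
        rw [← Real.rpow_mul hX0]
        congr 1
        ring
    _ ≤ k * b * X + C := hY X hX0
    _ = k * b * (∫ x in Ω, u x ^ (k + α - 1)) * (∫ x in Ω, u x ^ β) + C := by
        rw [hX]; ring
end

section
/- Assume the subquadratic parameter setting, let Ω ⊆ ℝⁿ be a measurable set, and set q := 2(k+1)/k, r := 2k'/k, λ := (1/r − 1/q)/(1/r − 1/p) and γ := 2(1−λ)q/(2−λq). Then for all c, b > 0 there exists C > 0 such that for every measurable u : Ω → [0,∞) with u^β and u^{k+α−1} Lebesgue integrable on Ω, one has c·(∫_Ω u^{k'})^{γ/r} ≤ k·b·(∫_Ω u^{k+α−1})·(∫_Ω u^β) + C. -/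
open MeasureTheory Real Set

/-- Young-type absorption: for `0 < s < 1` and positive `c, ε` there is `C > 0` with
`c·t^s ≤ ε·t + C` for all `t ≥ 0`. -/
lemma young_absorb {c ε s : ℝ} (hc : 0 < c) (hε : 0 < ε) (hs0 : 0 < s) (hs1 : s < 1) :
    ∃ C : ℝ, 0 < C ∧ ∀ t : ℝ, 0 ≤ t → c * t ^ s ≤ ε * t + C := by
  set M : ℝ := (c / ε) ^ (1 / (1 - s)) with hM
  have hMpos : 0 < M := Real.rpow_pos_of_pos (div_pos hc hε) _
  refine ⟨c * M ^ s + 1, by positivity, fun t ht => ?_⟩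
  rcases le_or_gt t M with h | h
  · have h1 : t ^ s ≤ M ^ s := Real.rpow_le_rpow ht h hs0.le
    nlinarith [mul_nonneg hε.le ht]
  · have htpos : 0 < t := hMpos.trans h
    have h2 : t ^ s = t * t ^ (s - 1) := by
      nth_rewrite 1 [show s = 1 + (s - 1) by ring]
      rw [Real.rpow_add htpos, Real.rpow_one]
    have h3 : t ^ (s - 1) ≤ M ^ (s - 1) :=
      Real.rpow_le_rpow_of_nonpos hMpos h.le (by linarith)
    have h1s : (1 : ℝ) - s ≠ 0 := by linarith
    have h4 : M ^ (s - 1) = ε / c := by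
      rw [hM, ← Real.rpow_mul (div_pos hc hε).le,
        show 1 / (1 - s) * (s - 1) = -((1 - s) / (1 - s)) by ring, div_self h1s,
        Real.rpow_neg_one, inv_div]
    have h5 : c * t ^ s ≤ ε * t := by
      rw [h2]
      calc c * (t * t ^ (s - 1)) ≤ c * (t * (ε / c)) := by
            apply mul_le_mul_of_nonneg_left _ hc.le
            exact mul_le_mul_of_nonneg_left (h3.trans_eq h4) htpos.le
        _ = ε * t := by field_simp
    nlinarith [Real.rpow_nonneg hMpos.le s]

set_option maxHeartbeats 1000000 in
/-- Subquadratic interpolation/Young estimate: for all `c, b > 0` there is `C > 0` with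
`c·(∫_Ω u^{k'})^{γ/r} ≤ k·b·(∫_Ω u^{k+α−1})·(∫_Ω u^β) + C`. -/
theorem stmt_14 (n : ℕ) (hn : 3 ≤ n) (α β k p k' q r lam gam : ℝ)
    (hα1 : 1 ≤ α) (hα2 : α < 2) (hβ : (n + 4 : ℝ) / 2 - α < β)
    (hk : max 1 (1 - α + β) < k)
    (hp : p = 2 * n / (n - 2))
    (hk' : k' = (k + α + β - 1) / 2)
    (hq : q = 2 * (k + 1) / k)
    (hr : r = 2 * k' / k)
    (hlam : lam = (1 / r - 1 / q) / (1 / r - 1 / p))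
    (hgam : gam = 2 * (1 - lam) * q / (2 - lam * q))
    (Ω : Set (Fin n → ℝ)) (hΩ : MeasurableSet Ω) :
    ∀ c b : ℝ, 0 < c → 0 < b → ∃ C : ℝ, 0 < C ∧
      ∀ u : (Fin n → ℝ) → ℝ, Measurable u → (∀ x ∈ Ω, 0 ≤ u x) →
        IntegrableOn (fun x => u x ^ β) Ω →
        IntegrableOn (fun x => u x ^ (k + α - 1)) Ω →
        c * (∫ x in Ω, u x ^ k') ^ (gam / r) ≤
          k * b * (∫ x in Ω, u x ^ (k + α - 1)) * (∫ x in Ω, u x ^ β) + C := by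
  intro c b hc hb
  have hn3 : (3 : ℝ) ≤ (n : ℝ) := by exact_mod_cast hn
  have hk1 : 1 < k := lt_of_le_of_lt (le_max_left _ _) hk
  have hk2 : 1 - α + β < k := lt_of_le_of_lt (le_max_right _ _) hk
  have hkpos : 0 < k := by linarith
  have hm : (n : ℝ) + 2 < 2 * (α + β - 1) := by linarith
  have hβpos : 0 < β := by linarith
  have hkα : 0 < k + α - 1 := by linarith
  have hKpos : 0 < k + α + β - 1 := by linarith
  have hk'pos : 0 < k' := by rw [hk']; linarith
  have hEpos : 0 < k + α + β - 1 - n := by linarith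
  have hDpos : 0 < ((n : ℝ) + 2) * k - ((n : ℝ) - 2) * (α + β - 1) := by
    nlinarith [mul_pos (show (0:ℝ) < 2 - α by linarith) (show (0:ℝ) < 2 * (n:ℝ) + 4 by linarith),
      mul_pos (show (0:ℝ) < (n:ℝ) + 2 by linarith) (show (0:ℝ) < k - (1 - α + β) by linarith)]
  have hn2 : (0 : ℝ) < (n : ℝ) - 2 := by linarith
  have hnpos : (0 : ℝ) < (n : ℝ) := by linarith
  have hKne : k + α + β - 1 ≠ 0 := hKpos.ne'
  have hkne : k ≠ 0 := hkpos.ne'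
  have hnne : (n : ℝ) ≠ 0 := hnpos.ne'
  have hk1ne : k + 1 ≠ 0 := by positivity
  have hDne : ((n : ℝ) + 2) * k - ((n : ℝ) - 2) * (α + β - 1) ≠ 0 := hDpos.ne'
  have hEne : k + α + β - 1 - (n : ℝ) ≠ 0 := hEpos.ne'
  have hr2 : r = (k + α + β - 1) / k := by rw [hr, hk']; ring
  have c1 : (0 : ℝ) < 2 * (n : ℝ) := by linarith
  have c2 : (0 : ℝ) < (k + α + β - 1) * (2 * (n : ℝ)) := mul_pos hKpos c1
  have c3 : (0 : ℝ) < 2 * (n : ℝ) * (k + α + β - 1) := mul_pos c1 hKpos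
  have c4 : (0 : ℝ) < 2 * (k + 1) := by linarith
  have c5 : (0 : ℝ) < (k + α + β - 1) * (2 * (k + 1)) := mul_pos hKpos c4
  have c6 : (0 : ℝ) < 2 * (k + α + β - 1) * (k + 1) := by
    have := mul_pos c4 hKpos; nlinarith
  have e1 : 1 / r - 1 / p = (((n : ℝ) + 2) * k - ((n : ℝ) - 2) * (α + β - 1)) /
      (2 * (n : ℝ) * (k + α + β - 1)) := by
    rw [hr2, hp, one_div_div, one_div_div, div_sub_div _ _ hKne c1.ne',
      div_eq_div_iff c2.ne' c3.ne']
    ring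
  have e2 : 1 / r - 1 / q = k * (k + 3 - α - β) / (2 * (k + α + β - 1) * (k + 1)) := by
    rw [hr2, hq, one_div_div, one_div_div, div_sub_div _ _ hKne c4.ne',
      div_eq_div_iff c5.ne' c6.ne']
    ring
  have hlam2 : lam = (n : ℝ) * k * (k + 3 - α - β) /
      ((k + 1) * (((n : ℝ) + 2) * k - ((n : ℝ) - 2) * (α + β - 1))) := by
    rw [hlam, e2, e1]
    field_simp
  have h2lq : 2 - lam * q = 4 * (k + α + β - 1 - (n : ℝ)) /
      (((n : ℝ) + 2) * k - ((n : ℝ) - 2) * (α + β - 1)) := by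
    rw [hlam2, hq]
    field_simp [show k * ((n : ℝ) + 2) - ((n : ℝ) - 2) * (α + β - 1) ≠ 0 by rw [mul_comm]; exact hDne]
    ring
  have h1l : 1 - lam = (2 * k * (k + α + β - 1 - (n : ℝ)) +
      (((n : ℝ) + 2) * k - ((n : ℝ) - 2) * (α + β - 1))) /
      ((k + 1) * (((n : ℝ) + 2) * k - ((n : ℝ) - 2) * (α + β - 1))) := by
    rw [hlam2]
    field_simp [show k * ((n : ℝ) + 2) - ((n : ℝ) - 2) * (α + β - 1) ≠ 0 by rw [mul_comm]; exact hDne]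
    ring
  have hgam2 : gam = (2 * k * (k + α + β - 1 - (n : ℝ)) +
      (((n : ℝ) + 2) * k - ((n : ℝ) - 2) * (α + β - 1))) /
      (k * (k + α + β - 1 - (n : ℝ))) := by
    rw [hgam, h2lq, h1l, hq]
    field_simp [show k * ((n : ℝ) + 2) - ((n : ℝ) - 2) * (α + β - 1) ≠ 0 by rw [mul_comm]; exact hDne]
    ring
  set s : ℝ := (2 * k * (k + α + β - 1 - (n : ℝ)) +
      (((n : ℝ) + 2) * k - ((n : ℝ) - 2) * (α + β - 1))) /
      (2 * (k + α + β - 1) * (k + α + β - 1 - (n : ℝ))) with hs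
  have hNpos : 0 < 2 * k * (k + α + β - 1 - (n : ℝ)) +
      (((n : ℝ) + 2) * k - ((n : ℝ) - 2) * (α + β - 1)) := by
    nlinarith [mul_pos hkpos hEpos]
  have hs0 : 0 < s := by
    rw [hs]
    exact div_pos hNpos (by nlinarith [mul_pos hKpos hEpos])
  have hgr : gam / r = 2 * s := by
    rw [hgam2, hr2, hs]
    rw [div_div_div_comm]
    field_simp
  have hs1 : s < 1 := by
    rw [hs, div_lt_one (by nlinarith [mul_pos hKpos hEpos])]
    nlinarith [mul_pos (show (0:ℝ) < 2 * (α + β - 1) - (n : ℝ) - 2 by linarith)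
      (show (0:ℝ) < k + (α + β - 1) by linarith)]
  obtain ⟨C, hC, hY⟩ := young_absorb hc (mul_pos hkpos hb) hs0 hs1
  refine ⟨C, hC, fun u hu hupos hIβ hIα => ?_⟩
  set A : ℝ := ∫ x in Ω, u x ^ β with hA
  set B : ℝ := ∫ x in Ω, u x ^ (k + α - 1) with hB
  set X : ℝ := ∫ x in Ω, u x ^ k' with hX
  have hA0 : 0 ≤ A := setIntegral_nonneg hΩ fun x hx => Real.rpow_nonneg (hupos x hx) _
  have hB0 : 0 ≤ B := setIntegral_nonneg hΩ fun x hx => Real.rpow_nonneg (hupos x hx) _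
  have hX0 : 0 ≤ X := setIntegral_nonneg hΩ fun x hx => Real.rpow_nonneg (hupos x hx) _
  set f : (Fin n → ℝ) → ℝ := fun x => u x ^ (β / 2) with hf
  set g : (Fin n → ℝ) → ℝ := fun x => u x ^ ((k + α - 1) / 2) with hg
  have hfm : Measurable f := hu.pow measurable_const
  have hgm : Measurable g := hu.pow measurable_const
  have htwo : ENNReal.ofReal (2:ℝ) = 2 := by
    rw [ENNReal.ofReal_ofNat]
  have hmemf : MemLp f (ENNReal.ofReal (2:ℝ)) (volume.restrict Ω) := by
    rw [htwo]
    refine (memLp_two_iff_integrable_sq hfm.aestronglyMeasurable).2 ?_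
    refine hIβ.congr ?_
    refine ((ae_restrict_iff' hΩ).2 (Filter.Eventually.of_forall fun x hx => ?_))
    rw [hf]
    simp only
    rw [← Real.rpow_natCast (u x ^ (β / 2)) 2, ← Real.rpow_mul (hupos x hx)]
    norm_num
  have hmemg : MemLp g (ENNReal.ofReal (2:ℝ)) (volume.restrict Ω) := by
    rw [htwo]
    refine (memLp_two_iff_integrable_sq hgm.aestronglyMeasurable).2 ?_
    refine hIα.congr ?_
    refine ((ae_restrict_iff' hΩ).2 (Filter.Eventually.of_forall fun x hx => ?_))
    rw [hg]
    simp only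
    rw [← Real.rpow_natCast (u x ^ ((k + α - 1) / 2)) 2, ← Real.rpow_mul (hupos x hx)]
    norm_num
  have hfnn : 0 ≤ᵐ[volume.restrict Ω] f :=
    (ae_restrict_iff' hΩ).2 (Filter.Eventually.of_forall fun x hx =>
      Real.rpow_nonneg (hupos x hx) _)
  have hgnn : 0 ≤ᵐ[volume.restrict Ω] g :=
    (ae_restrict_iff' hΩ).2 (Filter.Eventually.of_forall fun x hx =>
      Real.rpow_nonneg (hupos x hx) _)
  have hconj : Real.HolderConjugate 2 2 := by
    rw [Real.holderConjugate_iff]; norm_num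
  have hCS0 := MeasureTheory.integral_mul_le_Lp_mul_Lq_of_nonneg hconj hfnn hgnn hmemf hmemg
  have hsum : β / 2 + (k + α - 1) / 2 = k' := by rw [hk']; ring
  have eX : ∫ x in Ω, f x * g x = X := by
    refine setIntegral_congr_fun hΩ fun x hx => ?_
    rw [hf, hg]
    simp only
    rw [← Real.rpow_add' (hupos x hx) (by rw [hsum]; exact hk'pos.ne'), hsum]
  have eA : ∫ x in Ω, f x ^ (2:ℝ) = A := by
    refine setIntegral_congr_fun hΩ fun x hx => ?_
    rw [hf]
    simp only
    rw [← Real.rpow_mul (hupos x hx)]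
    norm_num
  have eB : ∫ x in Ω, g x ^ (2:ℝ) = B := by
    refine setIntegral_congr_fun hΩ fun x hx => ?_
    rw [hg]
    simp only
    rw [← Real.rpow_mul (hupos x hx)]
    norm_num
  rw [eX, eA, eB] at hCS0
  have hCS : X ≤ (A * B) ^ ((1:ℝ)/2) := by
    rw [Real.mul_rpow hA0 hB0]
    exact hCS0
  have key : X ^ (gam / r) ≤ (A * B) ^ s := by
    rw [hgr]
    calc X ^ (2 * s) ≤ ((A * B) ^ ((1:ℝ)/2)) ^ (2 * s) :=
          Real.rpow_le_rpow hX0 hCS (by positivity)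
      _ = (A * B) ^ s := by
          rw [← Real.rpow_mul (mul_nonneg hA0 hB0)]
          congr 1
          ring
  calc c * X ^ (gam / r) ≤ c * (A * B) ^ s :=
        mul_le_mul_of_nonneg_left key hc.le
    _ ≤ k * b * (A * B) + C := hY _ (mul_nonneg hA0 hB0)
    _ = k * b * B * A + C := by ring
end

section
/- Let n ≥ 3 be an integer, set p := 2n/(n−2), and let q, r be reals with 1 ≤ r < q < p and q/r < 2/r + 1 − 2/p; set λ := (1/r − 1/q)/(1/r − 1/p) and γ := 2(1−λ)q/(2−λq). Then for all ε₁, ε₂ > 0 there exists C₀ = C₀(ε₁, ε₂) > 0 such that for every continuously differentiable, compactly supported function φ : ℝⁿ → [0,∞) one has ‖φ‖_{L^q(ℝⁿ)}^q ≤ C₀·‖φ‖_{L^r(ℝⁿ)}^γ + ε₁·‖∇φ‖_{L^2(ℝⁿ)}^2 + ε₂·‖φ‖_{L^2(ℝⁿ)}^2. -/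
open MeasureTheory Real

/-- Young's inequality with an epsilon. -/
lemma aux_young_eps {m ε : ℝ} (hm : 1 < m) (hε : 0 < ε) :
    ∃ C : ℝ, 0 < C ∧ ∀ x y : ℝ, 0 ≤ x → 0 ≤ y →
      x * y ≤ ε * x ^ m + C * y ^ (m / (m - 1)) := by
  have hm0 : 0 < m := lt_trans one_pos hm
  set m' := m / (m - 1) with hm'
  have hconj : m.HolderConjugate m' := Real.HolderConjugate.conjExponent hm
  have hm'0 : 0 < m' := hconj.symm.pos
  set δ : ℝ := (ε * m) ^ (1 / m) with hδdef
  have hδ : 0 < δ := Real.rpow_pos_of_pos (by positivity) _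
  have hδm : δ ^ m = ε * m := by
    rw [hδdef, ← Real.rpow_mul (by positivity), one_div, inv_mul_cancel₀ hm0.ne',
      Real.rpow_one]
  refine ⟨(δ⁻¹) ^ m' / m' + 1, by positivity, fun x y hx hy => ?_⟩
  have h1 : x * y = (δ * x) * (δ⁻¹ * y) := by
    field_simp
  calc x * y = (δ * x) * (δ⁻¹ * y) := h1
    _ ≤ (δ * x) ^ m / m + (δ⁻¹ * y) ^ m' / m' :=
        Real.young_inequality_of_nonneg (by positivity) (by positivity) hconj
    _ = ε * x ^ m + ((δ⁻¹) ^ m' / m') * y ^ m' := by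
        rw [Real.mul_rpow hδ.le hx, Real.mul_rpow (by positivity) hy, hδm]
        field_simp
    _ ≤ ε * x ^ m + ((δ⁻¹) ^ m' / m' + 1) * y ^ m' := by
        have : (0:ℝ) ≤ y ^ m' := Real.rpow_nonneg hy _
        nlinarith

/-- Converting Bochner integrals of powers of a nonnegative continuous compactly supported
function to lower Lebesgue integrals. -/
lemma aux_conv {n : ℕ} (g : (Fin n → ℝ) → ℝ) (hc : Continuous g) (hs : HasCompactSupport g)
    (hg : ∀ x, 0 ≤ g x) {t : ℝ} (ht : 0 < t) :
    ∫ x, g x ^ t = (∫⁻ x, (ENNReal.ofReal (g x)) ^ t).toReal ∧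
      (∫⁻ x, (ENNReal.ofReal (g x)) ^ t) ≠ ⊤ := by
  have hct : Continuous fun x => g x ^ t := (Real.continuous_rpow_const ht.le).comp hc
  have hst : HasCompactSupport fun x => g x ^ t := by
    have : (fun x => g x ^ t) = (fun s : ℝ => s ^ t) ∘ g := rfl
    rw [this]
    exact hs.comp_left (by simp [Real.zero_rpow ht.ne'])
  have hint : Integrable (fun x => g x ^ t) := hct.integrable_of_hasCompactSupport hst
  have heq : ∀ x, ENNReal.ofReal (g x ^ t) = (ENNReal.ofReal (g x)) ^ t := fun x =>
    (ENNReal.ofReal_rpow_of_nonneg (hg x) ht.le).symm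
  constructor
  · rw [integral_eq_lintegral_of_nonneg_ae
      (Filter.Eventually.of_forall fun x => Real.rpow_nonneg (hg x) t)
      hct.aestronglyMeasurable]
    simp_rw [heq]
  · have := hint.lintegral_lt_top
    simp_rw [heq] at this
    exact this.ne

set_option maxHeartbeats 1000000 in
/-- Gagliardo–Nirenberg type inequality (Lemma 3.1 of the paper, whole-space setting):
for admissible `r < q < p` and every `ε₁, ε₂ > 0` there is `C₀ > 0` such that for all
nonnegative `C¹` compactly supported `φ`,
`‖φ‖_{L^q}^q ≤ C₀‖φ‖_{L^r}^γ + ε₁‖∇φ‖_{L²}² + ε₂‖φ‖_{L²}²`. -/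
theorem stmt_18 (n : ℕ) (hn : 3 ≤ n) (p q r lam gam : ℝ)
    (hp : p = 2 * n / (n - 2))
    (hr1 : 1 ≤ r) (hrq : r < q) (hqp : q < p)
    (hqr : q / r < 2 / r + 1 - 2 / p)
    (hlam : lam = (1 / r - 1 / q) / (1 / r - 1 / p))
    (hgam : gam = 2 * (1 - lam) * q / (2 - lam * q)) :
    ∀ ε₁ ε₂ : ℝ, 0 < ε₁ → 0 < ε₂ → ∃ C₀ : ℝ, 0 < C₀ ∧
      ∀ φ : (Fin n → ℝ) → ℝ, ContDiff ℝ 1 φ → HasCompactSupport φ →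
        (∀ x, 0 ≤ φ x) →
        ∫ x, φ x ^ q ≤ C₀ * (∫ x, φ x ^ r) ^ (gam / r)
          + ε₁ * (∫ x, ‖fderiv ℝ φ x‖ ^ (2 : ℝ))
          + ε₂ * (∫ x, φ x ^ (2 : ℝ)) := by
  intro ε₁ ε₂ hε₁ hε₂
  -- basic positivity facts
  have hn3 : (3:ℝ) ≤ (n:ℝ) := by exact_mod_cast hn
  have hn2 : (0:ℝ) < (n:ℝ) - 2 := by linarith
  have hr0 : (0:ℝ) < r := lt_of_lt_of_le one_pos hr1
  have hq0 : (0:ℝ) < q := lt_trans hr0 hrq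
  have hp2 : (2:ℝ) < p := by
    rw [hp]
    rw [lt_div_iff₀ hn2]
    linarith
  have hp0 : (0:ℝ) < p := by linarith
  -- facts about lam
  have hrp : 1/p < 1/r := one_div_lt_one_div_of_lt hr0 (by linarith)
  have hrq' : 1/q < 1/r := one_div_lt_one_div_of_lt hr0 hrq
  have hqp' : 1/p < 1/q := one_div_lt_one_div_of_lt hq0 hqp
  have hden : (0:ℝ) < 1/r - 1/p := by linarith
  have hlamEq : lam * (1/r - 1/p) = 1/r - 1/q := by
    rw [hlam, div_mul_cancel₀ _ (ne_of_gt hden)]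
  have hlam0 : 0 < lam := by
    rw [hlam]
    apply div_pos <;> linarith
  have hlam1 : lam < 1 := by
    rw [hlam]
    rw [div_lt_one hden]
    linarith
  have hkey : (1 - lam)/r + lam/p = 1/q := by
    linear_combination (-1 : ℝ) * hlamEq
  have hlq2 : lam * q < 2 := by
    have h1 : q * (1/r - 1/q) < 2 * (1/r - 1/p) := by
      have hq : q * (1/q) = 1 := by field_simp
      have hqr2 : q * (1/r) = q / r := by ring
      rw [mul_sub, mul_sub, hq, hqr2]
      have h2r : 2 * (1/r) = 2/r := by ring
      have h2p : 2 * (1/p) = 2/p := by ring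
      rw [h2r, h2p]
      linarith
    rw [hlam, div_mul_eq_mul_div, div_lt_iff₀ hden]
    calc (1/r - 1/q) * q = q * (1/r - 1/q) := by ring
      _ < 2 * (1/r - 1/p) := h1
  have hlq0 : 0 < lam * q := mul_pos hlam0 hq0
  -- (1-lam)*q < r
  have h1lq : 0 < (1 - lam) * q := mul_pos (by linarith) hq0
  have hs1 : (1 - lam) * q < r := by
    have h1 : (1 - lam)/r < 1/q := by
      have : lam/p > 0 := div_pos hlam0 hp0
      linarith
    have h2 := (div_lt_div_iff₀ hr0 hq0).mp h1
    nlinarith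
  -- gamma value
  have h2lq : (0:ℝ) < 2 - lam * q := by linarith
  -- Sobolev inequality setup
  set p' : NNReal := Real.toNNReal p with hp'def
  have hp'coe : (p' : ℝ) = p := Real.coe_toNNReal p hp0.le
  have hfr : Module.finrank ℝ (Fin n → ℝ) = n := Module.finrank_fin_fun ℝ
  have hfr0 : 0 < Module.finrank ℝ (Fin n → ℝ) := by rw [hfr]; omega
  have hp'inv : (p' : ℝ)⁻¹ = ((2:NNReal) : ℝ)⁻¹ - (Module.finrank ℝ (Fin n → ℝ) : ℝ)⁻¹ := by
    rw [hp'coe, hfr, hp]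
    rw [inv_div]
    have hne : ((n:ℝ)) ≠ 0 := by positivity
    push_cast
    field_simp
  obtain ⟨CS, hCS0, hCSeq⟩ : ∃ c : ℝ, 0 ≤ c ∧ ENNReal.ofReal c =
      ((SNormLESNormFDerivOfEqConst (F := ℝ) (volume : Measure (Fin n → ℝ)) 2 : NNReal) : ENNReal) :=
    ⟨_, NNReal.coe_nonneg _, ENNReal.ofReal_coe_nnreal⟩
  -- Young's inequality constant
  set m : ℝ := 2 / (lam * q) with hmdef
  have hm1 : 1 < m := by
    rw [hmdef, lt_div_iff₀ hlq0]; linarith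
  have hmm1 : (0:ℝ) < m - 1 := by linarith
  have hm' : m / (m - 1) = 2 / (2 - lam * q) := by
    rw [div_eq_div_iff hmm1.ne' h2lq.ne', hmdef]
    field_simp
  obtain ⟨C, hC, hyoung⟩ := aux_young_eps hm1 (show 0 < ε₁ / (CS^2 + 1) by positivity)
  refine ⟨C, hC, fun φ hφ1 hφs hφ0 => ?_⟩
  -- conversions
  have hφc : Continuous φ := hφ1.continuous
  obtain ⟨hiq, hiqfin⟩ := aux_conv φ hφc hφs hφ0 hq0
  obtain ⟨hir, hirfin⟩ := aux_conv φ hφc hφs hφ0 hr0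
  obtain ⟨hip, hipfin⟩ := aux_conv φ hφc hφs hφ0 hp0
  have hDc : Continuous fun x => ‖fderiv ℝ φ x‖ := (hφ1.continuous_fderiv one_ne_zero).norm
  have hDs : HasCompactSupport fun x => ‖fderiv ℝ φ x‖ := (hφs.fderiv ℝ).norm
  obtain ⟨hig, higfin⟩ := aux_conv (fun x => ‖fderiv ℝ φ x‖) hDc hDs (fun x => norm_nonneg _)
    (show (0:ℝ) < 2 by norm_num)
  set F : (Fin n → ℝ) → ENNReal := fun x => ENNReal.ofReal (φ x) with hFdef
  have hFmeas : AEMeasurable F volume := (ENNReal.measurable_ofReal.comp hφc.measurable).aemeasurable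
  set Iq := ∫⁻ x, F x ^ q with hIq
  set Ir := ∫⁻ x, F x ^ r with hIr
  set Ip := ∫⁻ x, F x ^ p with hIp
  set Ig := ∫⁻ x, (ENNReal.ofReal ‖fderiv ℝ φ x‖) ^ (2:ℝ) with hIg
  -- Hölder / interpolation in ℝ≥0∞ :  Iq ≤ Ir^((1-lam)q/r) * Ip^(lam q/p)
  have hconj : ((r / ((1 - lam) * q)) : ℝ).HolderConjugate (p / (lam * q)) := by
    rw [Real.holderConjugate_iff]
    constructor
    · rw [lt_div_iff₀ h1lq]; linarith
    · rw [inv_div, inv_div]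
      have e : (1 - lam) * q / r + lam * q / p = q * ((1 - lam)/r + lam/p) := by ring
      rw [e, hkey]
      field_simp
  have hholder : Iq ≤ Ir ^ ((1 - lam) * q / r) * Ip ^ (lam * q / p) := by
    have h1 : ∀ x, F x ^ q = (F x ^ ((1 - lam) * q)) * (F x ^ (lam * q)) := by
      intro x
      rw [← ENNReal.rpow_add_of_nonneg _ _ (by positivity) hlq0.le]
      congr 1; ring
    have h2 := ENNReal.lintegral_mul_le_Lp_mul_Lq volume hconj
      (f := fun x => F x ^ ((1 - lam) * q)) (g := fun x => F x ^ (lam * q))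
      (hFmeas.pow_const _) (hFmeas.pow_const _)
    simp only [Pi.mul_apply] at h2
    calc Iq = ∫⁻ x, (F x ^ ((1 - lam) * q)) * (F x ^ (lam * q)) := by
          rw [hIq]; congr 1; ext x; exact h1 x
      _ ≤ (∫⁻ x, (F x ^ ((1 - lam) * q)) ^ (r / ((1 - lam) * q))) ^ (1 / (r / ((1 - lam) * q)))
          * (∫⁻ x, (F x ^ (lam * q)) ^ (p / (lam * q))) ^ (1 / (p / (lam * q))) := h2
      _ = Ir ^ ((1 - lam) * q / r) * Ip ^ (lam * q / p) := by
          rw [one_div_div, one_div_div]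
          congr 2
          · rw [hIr]; congr 1; ext x
            rw [← ENNReal.rpow_mul]
            congr 1
            field_simp
            exact div_self (sub_ne_zero.mpr hlam1.ne')
          · rw [hIp]; congr 1; ext x
            rw [← ENNReal.rpow_mul]
            congr 1
            field_simp
  -- Sobolev inequality
  have hsobolev : Ip ^ (1/p) ≤ ENNReal.ofReal CS * Ig ^ (1/(2:ℝ)) := by
    have hS := MeasureTheory.eLpNorm_le_eLpNorm_fderiv_of_eq (F := ℝ)
      (μ := (volume : Measure (Fin n → ℝ))) hφ1 hφs (p := 2) (p' := p')
      (by norm_num) hfr0 hp'inv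
    have hp'0 : (p' : ENNReal) ≠ 0 := by
      simp only [ne_eq, ENNReal.coe_eq_zero]
      rw [← NNReal.coe_eq_zero, hp'coe]
      exact ne_of_gt hp0
    have e1 : eLpNorm φ p' volume = Ip ^ (1/p) := by
      rw [eLpNorm_eq_lintegral_rpow_enorm_toReal hp'0 ENNReal.coe_ne_top]
      have ht : ((p' : ENNReal)).toReal = p := by
        rw [ENNReal.coe_toReal, hp'coe]
      rw [ht, hIp]
      congr 1
      apply lintegral_congr
      intro x
      rw [← ofReal_norm_eq_enorm, Real.norm_of_nonneg (hφ0 x)]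
    have e2 : eLpNorm (fderiv ℝ φ) (2:NNReal) volume = Ig ^ (1/(2:ℝ)) := by
      rw [eLpNorm_eq_lintegral_rpow_enorm_toReal (by norm_num) (by norm_num)]
      have ht : (((2:NNReal) : ENNReal)).toReal = (2:ℝ) := by norm_num
      rw [ht, hIg]
      congr 1
      apply lintegral_congr
      intro x
      rw [← ofReal_norm_eq_enorm]
    rw [e1, e2] at hS
    calc Ip ^ (1/p) ≤ (SNormLESNormFDerivOfEqConst (F := ℝ) (volume : Measure (Fin n → ℝ)) 2
          : NNReal) * Ig ^ (1/(2:ℝ)) := hS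
      _ = ENNReal.ofReal CS * Ig ^ (1/(2:ℝ)) := by rw [hCSeq]
  -- pass to real numbers
  set iq : ℝ := Iq.toReal
  set ir : ℝ := Ir.toReal
  set ip : ℝ := Ip.toReal
  set ig : ℝ := Ig.toReal
  have hir0 : 0 ≤ ir := ENNReal.toReal_nonneg
  have hip0 : 0 ≤ ip := ENNReal.toReal_nonneg
  have hig0 : 0 ≤ ig := ENNReal.toReal_nonneg
  have hholderR : iq ≤ ir ^ ((1 - lam) * q / r) * ip ^ (lam * q / p) := by
    have hfin : Ir ^ ((1 - lam) * q / r) * Ip ^ (lam * q / p) ≠ ⊤ :=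
      ENNReal.mul_ne_top (ENNReal.rpow_ne_top_of_nonneg (by positivity) hirfin)
        (ENNReal.rpow_ne_top_of_nonneg (by positivity) hipfin)
    have := ENNReal.toReal_mono hfin hholder
    rwa [ENNReal.toReal_mul, ← ENNReal.toReal_rpow, ← ENNReal.toReal_rpow] at this
  have hsobolevR : ip ^ (1/p) ≤ CS * ig ^ (1/(2:ℝ)) := by
    have hfin : ENNReal.ofReal CS * Ig ^ (1/(2:ℝ)) ≠ ⊤ :=
      ENNReal.mul_ne_top ENNReal.ofReal_ne_top
        (ENNReal.rpow_ne_top_of_nonneg (by norm_num) higfin)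
    have := ENNReal.toReal_mono hfin hsobolev
    rwa [ENNReal.toReal_mul, ENNReal.toReal_ofReal hCS0, ← ENNReal.toReal_rpow,
      ← ENNReal.toReal_rpow] at this
  -- combine
  have step1 : ip ^ (lam * q / p) ≤ CS ^ (lam * q) * ig ^ (lam * q / 2) := by
    have e1 : ip ^ (lam * q / p) = (ip ^ (1/p)) ^ (lam * q) := by
      rw [← Real.rpow_mul hip0]
      congr 1; ring
    rw [e1]
    calc (ip ^ (1/p)) ^ (lam * q) ≤ (CS * ig ^ (1/(2:ℝ))) ^ (lam * q) :=
          Real.rpow_le_rpow (Real.rpow_nonneg hip0 _) hsobolevR hlq0.le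
      _ = CS ^ (lam * q) * ig ^ (lam * q / 2) := by
          rw [Real.mul_rpow hCS0 (Real.rpow_nonneg hig0 _), ← Real.rpow_mul hig0]
          congr 2; ring
  have hyoung' := hyoung (CS ^ (lam * q) * ig ^ (lam * q / 2)) (ir ^ ((1 - lam) * q / r))
    (by positivity) (Real.rpow_nonneg hir0 _)
  -- simplify the Young terms
  have hxm : (CS ^ (lam * q) * ig ^ (lam * q / 2)) ^ m = CS ^ 2 * ig := by
    rw [Real.mul_rpow (Real.rpow_nonneg hCS0 _) (Real.rpow_nonneg hig0 _),
      ← Real.rpow_mul hCS0, ← Real.rpow_mul hig0]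
    have e1 : lam * q * m = 2 := by
      rw [hmdef]; field_simp
    have e2 : lam * q / 2 * m = 1 := by
      rw [hmdef]; field_simp
    rw [e1, e2, Real.rpow_one]
    norm_num
  have hym : (ir ^ ((1 - lam) * q / r)) ^ (m / (m - 1)) = ir ^ (gam / r) := by
    rw [← Real.rpow_mul hir0, hm']
    congr 1
    rw [hgam]
    field_simp
  rw [hxm, hym] at hyoung'
  -- final inequality
  have hfinal : iq ≤ C * ir ^ (gam / r) + ε₁ * ig := by
    have h1 : iq ≤ (CS ^ (lam * q) * ig ^ (lam * q / 2)) * (ir ^ ((1 - lam) * q / r)) := by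
      calc iq ≤ ir ^ ((1 - lam) * q / r) * ip ^ (lam * q / p) := hholderR
        _ ≤ ir ^ ((1 - lam) * q / r) * (CS ^ (lam * q) * ig ^ (lam * q / 2)) := by
            apply mul_le_mul_of_nonneg_left step1 (Real.rpow_nonneg hir0 _)
        _ = (CS ^ (lam * q) * ig ^ (lam * q / 2)) * (ir ^ ((1 - lam) * q / r)) := by ring
    have h2 : ε₁ / (CS^2 + 1) * (CS ^ 2 * ig) ≤ ε₁ * ig := by
      have key : CS^2/(CS^2+1) ≤ 1 := by
        rw [div_le_one (by positivity)]; linarith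
      calc ε₁ / (CS^2 + 1) * (CS ^ 2 * ig) = (CS^2/(CS^2+1)) * (ε₁ * ig) := by ring
        _ ≤ 1 * (ε₁ * ig) := mul_le_mul_of_nonneg_right key (by positivity)
        _ = ε₁ * ig := one_mul _
    linarith
  have hi2 : 0 ≤ ∫ x, φ x ^ (2:ℝ) :=
    integral_nonneg fun x => Real.rpow_nonneg (hφ0 x) _
  rw [hiq, hir]
  calc iq ≤ C * ir ^ (gam / r) + ε₁ * ig := hfinal
    _ ≤ C * ir ^ (gam / r) + ε₁ * ig + ε₂ * ∫ x, φ x ^ (2:ℝ) := by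
        have := mul_nonneg hε₂.le hi2
        linarith
    _ = C * ir ^ (gam / r) + ε₁ * (∫ x, ‖fderiv ℝ φ x‖ ^ (2:ℝ)) + ε₂ * ∫ x, φ x ^ (2:ℝ) := by
        rw [hig]
end
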